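/- arXiv:2010.15080 — 2 statements merged into one kernel-verified Lean document; each statement's English description precedes it below -/
import Mathlib

section
/- For every natural number n, the n-th Bernoulli–Fibonacci polynomial has the expansion B_n^F(x) = ∑_{j=0}^{n} [n choose j]_F · b_j^F · x^{n−j}, where [n choose j]_F denotes the Fibonomial coefficient and b_j^F = B_j^F(0) are the Bernoulli–Fibonacci numbers. -/
/-- The fibofactorial: `F_n! = F_1 * F_2 * ... * F_n`, with `F_0! = 1`. -/
def fibFact (n : ℕ) : ℕ := ∏ i ∈ Finset.range n, Nat.fib (i + 1)

/-- The Fibonomial coefficient `[n choose k]_F = F_n! / (F_k! * F_{n-k}!)` as a rational. -/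
def fibonomial (n k : ℕ) : ℚ := (fibFact n : ℚ) / ((fibFact k : ℚ) * (fibFact (n - k) : ℚ))

lemma fibFact_ne_zero (n : ℕ) : (fibFact n : ℚ) ≠ 0 := by
  have : fibFact n ≠ 0 := by
    unfold fibFact
    exact Finset.prod_ne_zero_iff.2 fun i _ => (Nat.fib_pos.2 i.succ_pos).ne'
  exact_mod_cast this

/-- For every `n`, `B_n^F(x) = ∑_{j=0}^{n} [n choose j]_F * b_j^F * x^{n-j}`, where
`b_j^F = B_j^F(0)`. Here `B` is the (unique) sequence of Bernoulli–Fibonacci polynomials,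
characterized by the generating-function identity
`(∑ B_n(x) z^n/F_n!) * (∑_{n≥1} z^n/F_n!) = z * ∑ x^n z^n/F_n!` in `(ℚ[x])⟦z⟧`. -/
theorem bernoulliFib_expansion
    (B : ℕ → Polynomial ℚ)
    (hB : (PowerSeries.mk fun n => Polynomial.C ((fibFact n : ℚ)⁻¹) * B n) *
          (PowerSeries.mk fun n =>
            if n = 0 then 0 else Polynomial.C ((fibFact n : ℚ)⁻¹)) =
          PowerSeries.X *
          PowerSeries.mk (fun n => Polynomial.C ((fibFact n : ℚ)⁻¹) * Polynomial.X ^ n))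
    (n : ℕ) :
    B n = ∑ j ∈ Finset.range (n + 1),
      Polynomial.C (fibonomial n j * (B j).eval 0) * Polynomial.X ^ (n - j) := by
  classical
  set f : PowerSeries (Polynomial ℚ) :=
    PowerSeries.mk fun n => Polynomial.C ((fibFact n : ℚ)⁻¹) * B n with hf
  set g : PowerSeries (Polynomial ℚ) :=
    PowerSeries.mk fun n => if n = 0 then 0 else Polynomial.C ((fibFact n : ℚ)⁻¹) with hg
  set e : PowerSeries (Polynomial ℚ) :=
    PowerSeries.mk fun n => Polynomial.C ((fibFact n : ℚ)⁻¹) * Polynomial.X ^ n with he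
  set f0 : PowerSeries (Polynomial ℚ) :=
    PowerSeries.mk fun n => Polynomial.C ((fibFact n : ℚ)⁻¹ * (B n).eval 0) with hf0
  -- Apply evaluation at 0 to hB
  have hev : f0 * g = PowerSeries.X := by
    have := congrArg (PowerSeries.map
      (Polynomial.C.comp (Polynomial.evalRingHom (0 : ℚ)))) hB
    have hmapf : PowerSeries.map (Polynomial.C.comp (Polynomial.evalRingHom (0 : ℚ))) f = f0 := by
      ext m
      simp [PowerSeries.coeff_map, hf, hf0]
    have hmapg : PowerSeries.map (Polynomial.C.comp (Polynomial.evalRingHom (0 : ℚ))) g = g := by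
      ext m
      by_cases hm : m = 0 <;> simp [PowerSeries.coeff_map, hg, hm]
    have hmape : PowerSeries.map (Polynomial.C.comp (Polynomial.evalRingHom (0 : ℚ))) e = 1 := by
      ext m
      by_cases hm : m = 0 <;>
        simp [PowerSeries.coeff_map, he, hm, PowerSeries.coeff_one, zero_pow, fibFact]
    rw [map_mul, map_mul, PowerSeries.map_X, hmapf, hmapg, hmape, mul_one] at this
    exact this
  -- cancel g
  have hg1 : g ≠ 0 := by
    intro h
    have := congrArg (PowerSeries.coeff (R := Polynomial ℚ) 1) h
    simp [hg, fibFact] at this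
  have key : f = f0 * e := by
    have h1 : f * g = (f0 * e) * g := by
      rw [hB, ← hev]; ring
    exact mul_right_cancel₀ hg1 h1
  -- take coefficient n
  have hcoeff := congrArg (PowerSeries.coeff (R := Polynomial ℚ) n) key
  rw [PowerSeries.coeff_mul] at hcoeff
  simp only [hf, hf0, he, PowerSeries.coeff_mk] at hcoeff
  rw [Finset.Nat.sum_antidiagonal_eq_sum_range_succ_mk] at hcoeff
  have hmul := congrArg (fun p => Polynomial.C (fibFact n : ℚ) * p) hcoeff
  simp only at hmul
  rw [← mul_assoc, ← Polynomial.C_mul, mul_inv_cancel₀ (fibFact_ne_zero n),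
    Polynomial.C_1, one_mul, Finset.mul_sum] at hmul
  rw [hmul]
  refine Finset.sum_congr rfl fun j hj => ?_
  have hjn : j ≤ n := Nat.lt_succ_iff.mp (Finset.mem_range.mp hj)
  have hc : fibonomial n j * (B j).eval 0 =
      (fibFact n : ℚ) * (((fibFact j : ℚ))⁻¹ * (B j).eval 0) * ((fibFact (n - j) : ℚ))⁻¹ := by
    rw [fibonomial]
    field_simp [fibFact_ne_zero]
  rw [hc]
  simp only [Polynomial.C_mul]
  ring
end

section
/- The Golden exponential function is an eigenfunction of the Golden derivative: for all real numbers k and all real x ≠ 0, (e_F(kφx) − e_F(−kx/φ)) / ((φ + 1/φ)·x) = k · e_F(kx), where e_F(t) = ∑_{n=0}^∞ t^n/F_n! and φ = (1+√5)/2. -/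
open goldenRatio

/-- The golden ratio `φ = (1 + √5)/2`. -/
noncomputable def phi : ℝ := (1 + Real.sqrt 5) / 2

/-- The Golden exponential function `e_F(t) = ∑ t^n / F_n!`. -/
noncomputable def eF (t : ℝ) : ℝ := ∑' n : ℕ, t ^ n / (fibFact n : ℝ)

lemma fibFact_succ (n : ℕ) : fibFact (n + 1) = fibFact n * Nat.fib (n + 1) :=
  Finset.prod_range_succ _ _

lemma fibFact_pos (n : ℕ) : 0 < fibFact n :=
  Finset.prod_pos fun i _ => Nat.fib_pos.2 (Nat.succ_pos i)

lemma summable_eF (t : ℝ) : Summable (fun n : ℕ => t ^ n / (fibFact n : ℝ)) := by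
  apply summable_of_ratio_norm_eventually_le (r := 1/2) (by norm_num)
  filter_upwards [Filter.eventually_ge_atTop (max 5 ⌈2 * |t|⌉₊)] with n hn
  have h5 : 5 ≤ n + 1 := le_trans (le_max_left _ _) (hn.trans (Nat.le_succ n))
  have hfib : (n + 1 : ℕ) ≤ Nat.fib (n + 1) := Nat.le_fib_self h5
  have hceil : ⌈2 * |t|⌉₊ ≤ n := le_trans (le_max_right _ _) hn
  have ht : 2 * |t| ≤ (n : ℝ) := (Nat.le_ceil _).trans (by exact_mod_cast hceil)
  have hfibR : 2 * |t| ≤ (Nat.fib (n + 1) : ℝ) := by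
    have : ((n : ℝ) + 1) ≤ (Nat.fib (n + 1) : ℝ) := by exact_mod_cast hfib
    linarith
  have hfpos : (0 : ℝ) < Nat.fib (n + 1) := by exact_mod_cast Nat.fib_pos.2 (Nat.succ_pos n)
  have hfnpos : (0 : ℝ) < (fibFact n : ℝ) := by exact_mod_cast fibFact_pos n
  have key : |t| / (Nat.fib (n + 1) : ℝ) ≤ 1 / 2 := by
    rw [div_le_iff₀ hfpos]; linarith
  have heq : ‖t ^ (n + 1) / (fibFact (n + 1) : ℝ)‖
      = |t| / (Nat.fib (n + 1) : ℝ) * ‖t ^ n / (fibFact n : ℝ)‖ := by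
    rw [fibFact_succ]
    push_cast
    rw [Real.norm_eq_abs, Real.norm_eq_abs, abs_div, abs_div, pow_succ, abs_mul,
      abs_mul, abs_of_pos hfnpos, abs_of_pos hfpos]
    field_simp
  rw [heq]
  exact mul_le_mul_of_nonneg_right key (norm_nonneg _)

/-- The Golden exponential is an eigenfunction of the Golden derivative:
for all real `k` and all `x ≠ 0`, `D_F (e_F(k·)) (x) = k * e_F(kx)`. -/
theorem goldenExp_eigenfunction (k x : ℝ) (hx : x ≠ 0) :
    (eF (k * (phi * x)) - eF (-(k * x / phi))) / ((phi + 1 / phi) * x) = k * eF (k * x) := by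
  set t := k * x with ht
  have hphi : phi = Real.goldenRatio := rfl
  have hgold0 : Real.goldenRatio ≠ 0 := Real.goldenRatio_ne_zero
  have hsqrt5 : Real.sqrt 5 > 0 := Real.sqrt_pos.2 (by norm_num)
  have hpsi : -(1 / Real.goldenRatio) = Real.goldenConj := by
    rw [one_div, Real.inv_goldenRatio]; ring
  have harg1 : k * (phi * x) = t * Real.goldenRatio := by rw [hphi, ht]; ring
  have harg2 : -(k * x / phi) = t * Real.goldenConj := by
    rw [hphi, ht, div_eq_mul_inv, Real.inv_goldenRatio]; ring
  have hden : phi + 1 / phi = Real.sqrt 5 := by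
    rw [hphi, one_div, Real.inv_goldenRatio, ← sub_eq_add_neg]
    exact Real.goldenRatio_sub_goldenConj
  rw [harg1, harg2, hden]
  have hs1 : Summable (fun n : ℕ => (t * Real.goldenRatio) ^ n / (fibFact n : ℝ)) := summable_eF _
  have hs2 : Summable (fun n : ℕ => (t * Real.goldenConj) ^ n / (fibFact n : ℝ)) := summable_eF _
  have hsub : eF (t * Real.goldenRatio) - eF (t * Real.goldenConj)
      = ∑' n : ℕ, (Real.sqrt 5 * (t ^ n * Nat.fib n / (fibFact n : ℝ))) := by
    rw [eF, eF, ← Summable.tsum_sub hs1 hs2]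
    congr 1; funext n
    have hbin : Real.goldenRatio ^ n - Real.goldenConj ^ n = Real.sqrt 5 * Nat.fib n := by
      rw [Real.coe_fib_eq]; field_simp
    rw [mul_pow t Real.goldenRatio n, mul_pow t Real.goldenConj n, ← sub_div, ← mul_sub, hbin]
    ring
  rw [hsub, tsum_mul_left]
  have hg : Summable (fun n : ℕ => t ^ n * Nat.fib n / (fibFact n : ℝ)) := by
    rw [← summable_nat_add_iff 1]
    have : (fun n : ℕ => t ^ (n + 1) * Nat.fib (n + 1) / (fibFact (n + 1) : ℝ))
        = fun n : ℕ => t * (t ^ n / (fibFact n : ℝ)) := by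
      funext n
      have hf : (Nat.fib (n + 1) : ℝ) ≠ 0 := by
        exact_mod_cast (Nat.fib_pos.2 (Nat.succ_pos n)).ne'
      have hff : (fibFact n : ℝ) ≠ 0 := by exact_mod_cast (fibFact_pos n).ne'
      rw [fibFact_succ]; push_cast; field_simp; ring
    rw [this]
    exact (summable_eF t).mul_left t
  have hshift : (∑' n : ℕ, t ^ n * Nat.fib n / (fibFact n : ℝ)) = t * eF t := by
    rw [Summable.tsum_eq_zero_add hg]
    simp only [Nat.fib_zero, Nat.cast_zero, mul_zero, zero_div, zero_add]
    have : (fun n : ℕ => t ^ (n + 1) * Nat.fib (n + 1) / (fibFact (n + 1) : ℝ))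
        = fun n : ℕ => t * (t ^ n / (fibFact n : ℝ)) := by
      funext n
      have hf : (Nat.fib (n + 1) : ℝ) ≠ 0 := by
        exact_mod_cast (Nat.fib_pos.2 (Nat.succ_pos n)).ne'
      have hff : (fibFact n : ℝ) ≠ 0 := by exact_mod_cast (fibFact_pos n).ne'
      rw [fibFact_succ]; push_cast; field_simp; ring
    rw [this, tsum_mul_left, eF]
  rw [hshift, ht]
  field_simp
end
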